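/- arXiv:gr-qc/0407094 — 2 statements merged into one kernel-verified Lean document; each statement's English description precedes it below -/
import Mathlib

section
/- A globally hyperbolic poset is locally compact in its interval topology. -/
open Set

/-- `a` is way below `x`. -/
def wayBelow {α : Type*} [Preorder α] (a x : α) : Prop :=
  ∀ S : Set α, S.Nonempty → DirectedOn (· ≤ ·) S → ∀ d, IsLUB S d → x ≤ d →
    ∃ s ∈ S, a ≤ s

/-- A poset is continuous if every element is the supremum of a directed set
of elements way below it. -/
def ContinuousPoset (α : Type*) [Preorder α] : Prop :=
  ∀ x : α, ∃ S : Set α, S ⊆ {a | wayBelow a x} ∧ S.Nonempty ∧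
    DirectedOn (· ≤ ·) S ∧ IsLUB S x

/-- A basis for a continuous poset. -/
def PosetBasis {α : Type*} [Preorder α] (B : Set α) : Prop :=
  ∀ x : α, ∃ S : Set α, S ⊆ B ∩ {a | wayBelow a x} ∧ S.Nonempty ∧
    DirectedOn (· ≤ ·) S ∧ IsLUB S x

/-- Scott open sets: upper sets inaccessible by directed suprema. -/
def ScottOpen {α : Type*} [Preorder α] (U : Set α) : Prop :=
  IsUpperSet U ∧ ∀ S : Set α, S.Nonempty → DirectedOn (· ≤ ·) S → ∀ d, IsLUB S d →
    d ∈ U → (S ∩ U).Nonempty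

/-- The Scott topology. -/
def scottTop (α : Type*) [Preorder α] : TopologicalSpace α :=
  TopologicalSpace.generateFrom {U | ScottOpen U}

/-- A bicontinuous poset. -/
def Bicontinuous (α : Type*) [Preorder α] : Prop :=
  ContinuousPoset α ∧
  (∀ x y : α, wayBelow x y ↔
    ∀ S : Set α, S.Nonempty → DirectedOn (· ≥ ·) S → ∀ i, IsGLB S i → i ≤ x →
      ∃ s ∈ S, s ≤ y) ∧
  (∀ x : α, DirectedOn (· ≥ ·) {y | wayBelow x y} ∧ IsGLB {y | wayBelow x y} x)

/-- The basic open intervals `(a,b) = {x | a ≪ x ≪ b}`. -/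
def intervalBasis (α : Type*) [Preorder α] : Set (Set α) :=
  {s | ∃ a b : α, s = {x | wayBelow a x ∧ wayBelow x b}}

/-- The interval topology, generated by the sets `(a,b)`. -/
def intervalTop (α : Type*) [Preorder α] : TopologicalSpace α :=
  TopologicalSpace.generateFrom (intervalBasis α)

/-- A globally hyperbolic poset: bicontinuous, with compact closed intervals. -/
def GloballyHyperbolic (α : Type*) [PartialOrder α] : Prop :=
  Bicontinuous α ∧ ∀ a b : α, @IsCompact α (intervalTop α) (Set.Icc a b)

/-- The poset of closed intervals `[a,b]`, `a ≤ b`, under reverse inclusion. -/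
def IX (α : Type*) [PartialOrder α] := {p : α × α // p.1 ≤ p.2}

instance IX.instPartialOrder {α : Type*} [PartialOrder α] : PartialOrder (IX α) where
  le x y := x.1.1 ≤ y.1.1 ∧ y.1.2 ≤ x.1.2
  le_refl x := ⟨le_refl _, le_refl _⟩
  le_trans x y z h1 h2 := ⟨h1.1.trans h2.1, h2.2.trans h1.2⟩
  le_antisymm x y h1 h2 :=
    Subtype.ext (Prod.ext_iff.mpr ⟨le_antisymm h1.1 h2.1, le_antisymm h2.2 h1.2⟩)

section Rel

variable {β : Type*}

/-- Directedness with respect to an arbitrary relation. -/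
def relDirectedOn (r : β → β → Prop) (S : Set β) : Prop :=
  ∀ x ∈ S, ∀ y ∈ S, ∃ z ∈ S, r x z ∧ r y z

/-- Least upper bound with respect to an arbitrary relation. -/
def relIsLUB (r : β → β → Prop) (S : Set β) (d : β) : Prop :=
  (∀ s ∈ S, r s d) ∧ ∀ u, (∀ s ∈ S, r s u) → r d u

/-- The way-below relation with respect to an arbitrary relation. -/
def relWayBelow (r : β → β → Prop) (a x : β) : Prop :=
  ∀ S : Set β, S.Nonempty → relDirectedOn r S → ∀ d, relIsLUB r S d → r x d →
    ∃ s ∈ S, r a s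

/-- An abstract basis: a transitive relation, interpolative from the `-` direction. -/
def AbstractBasis (r : β → β → Prop) : Prop :=
  Transitive r ∧ ∀ (F : Finset β) (x : β), (∀ y ∈ F, r y x) →
    ∃ z, (∀ y ∈ F, r y z) ∧ r z x

/-- Interpolation in the `+` direction. -/
def PlusInterpolative (r : β → β → Prop) : Prop :=
  ∀ (F : Finset β) (x : β), (∀ y ∈ F, r x y) → ∃ z, r x z ∧ (∀ y ∈ F, r z y)

/-- An ideal: a nonempty directed lower set. -/
def IsIdeal (r : β → β → Prop) (I : Set β) : Prop :=
  I.Nonempty ∧ (∀ x y, r x y → y ∈ I → x ∈ I) ∧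
    ∀ x ∈ I, ∀ y ∈ I, ∃ z ∈ I, r x z ∧ r y z

/-- The ideal completion: ideals ordered by inclusion. -/
def IdealCompletion (r : β → β → Prop) := {I : Set β // IsIdeal r I}

instance IdealCompletion.instPartialOrder {β : Type*} (r : β → β → Prop) :
    PartialOrder (IdealCompletion r) where
  le I J := I.1 ⊆ J.1
  le_refl I := subset_rfl
  le_trans I J K h1 h2 := Set.Subset.trans h1 h2
  le_antisymm I J h1 h2 := Subtype.ext (Set.Subset.antisymm h1 h2)

end Rel

/-- The order on maximal elements induced by interval endpoints. -/
def maxLe {α : Type*} (left right : α → α) (a b : α) : Prop :=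
  ∃ x, left x = a ∧ right x = b

/-- An interval poset. -/
structure IntervalPoset (α : Type*) [PartialOrder α] where
  left : α → α
  right : α → α
  left_max : ∀ x, IsMax (left x)
  right_max : ∀ x, IsMax (right x)
  glb : ∀ x, IsGLB {left x, right x} x
  glue : ∀ x y, right x = left y →
    ∃ z, IsGLB {x, y} z ∧ left z = left x ∧ right z = right y
  sub_left : ∀ x p, IsMax p → x ≤ p →
    ∃ z, IsGLB {left x, p} z ∧ left z = left x ∧ right z = p
  sub_right : ∀ x p, IsMax p → x ≤ p →
    ∃ z, IsGLB {p, right x} z ∧ left z = p ∧ right z = right x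

/-- An interval domain. -/
structure IntervalDomain (α : Type*) [PartialOrder α] extends IntervalPoset α where
  dcpo : ∀ S : Set α, S.Nonempty → DirectedOn (· ≤ ·) S → ∃ d, IsLUB S d
  cont : ContinuousPoset α
  ax1 : ∀ x p, IsMax p → wayBelow x p →
    (∀ z, IsGLB {left x, p} z → ∃ u, wayBelow z u) ∧
    (∀ z, IsGLB {p, right x} z → ∃ u, wayBelow z u)
  ax2b : ∀ x : α, (∃ u, wayBelow x u) ↔
    (∀ y, left y = left x → y ≤ x →
      relWayBelow (fun u v => u ≤ v ∧ right u = right y ∧ right v = right y) y (right y))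
  ax2c : ∀ x : α, (∃ u, wayBelow x u) ↔
    (∀ y, right y = right x → y ≤ x →
      relWayBelow (fun u v => u ≤ v ∧ left u = left y ∧ left v = left y) y (left y))
  ax3a : ∀ (p : α) (S : Set α), S.Nonempty → S ⊆ {z | left z = p} →
    DirectedOn (· ≤ ·) S → ∀ u, IsLUB S u →
      left u = p ∧ ∀ (q : α) (T : Set α), T.Nonempty → T ⊆ {z | left z = q} →
        DirectedOn (· ≤ ·) T → ∀ v, IsLUB T v → right '' T = right '' S →
          right u = right v
  ax3b : ∀ (q : α) (S : Set α), S.Nonempty → S ⊆ {z | right z = q} →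
    DirectedOn (· ≤ ·) S → ∀ u, IsLUB S u →
      right u = q ∧ ∀ (p : α) (T : Set α), T.Nonempty → T ⊆ {z | right z = p} →
        DirectedOn (· ≤ ·) T → ∀ v, IsLUB T v → left '' T = left '' S →
          left u = left v
  ax4 : ∀ x : α, @IsCompact α (scottTop α) ({y | x ≤ y} ∩ {y | IsMax y})


section AuxLemmas

open OrderDual

variable {β : Type*} [Preorder β]

lemma wayBelow_le' {a x : β} (h : wayBelow a x) : a ≤ x := by
  obtain ⟨s, hs, hle⟩ := h {x} ⟨x, rfl⟩
    (fun u hu v hv => ⟨x, rfl, by simp_all, by simp_all⟩) x isLUB_singleton le_rfl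
  simp only [Set.mem_singleton_iff] at hs
  exact hs ▸ hle

lemma le_trans_wayBelow {a b c : β} (hab : a ≤ b) (h : wayBelow b c) : wayBelow a c :=
  fun S hne hdir d hlub hcd => by
    obtain ⟨s, hs, hle⟩ := h S hne hdir d hlub hcd
    exact ⟨s, hs, hab.trans hle⟩

lemma wayBelow_trans_le {a b c : β} (h : wayBelow a b) (hbc : b ≤ c) : wayBelow a c :=
  fun S hne hdir d hlub hcd => h S hne hdir d hlub (hbc.trans hcd)

lemma directedOn_finite_bound {S : Set β} (hdir : DirectedOn (· ≤ ·) S)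
    (hne : S.Nonempty) {T : Set β} (hT : T.Finite) (hTS : T ⊆ S) :
    ∃ s ∈ S, ∀ t ∈ T, t ≤ s := by
  refine Set.Finite.induction_on (motive := fun T _ => T ⊆ S → ∃ s ∈ S, ∀ t ∈ T, t ≤ s)
    T hT (fun _ => ⟨hne.choose, hne.choose_spec, by simp⟩) ?_ hTS
  rintro a T haT hTfin ih hsub
  obtain ⟨s, hs, hbound⟩ := ih (Set.Subset.trans (Set.subset_insert a T) hsub)
  obtain ⟨z, hz, haz, hsz⟩ := hdir a (hsub (Set.mem_insert a T)) s hs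
  refine ⟨z, hz, fun t ht => ?_⟩
  rcases Set.mem_insert_iff.mp ht with rfl | ht
  · exact haz
  · exact (hbound t ht).trans hsz

lemma interp (hc : ContinuousPoset β) {a x : β} (hax : wayBelow a x) :
    ∃ c, wayBelow a c ∧ wayBelow c x := by
  obtain ⟨D, hDsub, hDne, hDdir, hDlub⟩ := hc x
  set S : Set β := {u | ∃ v, wayBelow u v ∧ wayBelow v x} with hS
  have hSne : S.Nonempty := by
    obtain ⟨v, hv⟩ := hDne
    obtain ⟨E, hEsub, hEne, _, _⟩ := hc v
    obtain ⟨u, hu⟩ := hEne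
    exact ⟨u, v, hEsub hu, hDsub hv⟩
  have hSdir : DirectedOn (· ≤ ·) S := by
    rintro u1 ⟨v1, hu1, hv1⟩ u2 ⟨v2, hu2, hv2⟩
    obtain ⟨d1, hd1, hv1d1⟩ := hv1 D hDne hDdir x hDlub le_rfl
    obtain ⟨d2, hd2, hv2d2⟩ := hv2 D hDne hDdir x hDlub le_rfl
    obtain ⟨d, hd, hd1d, hd2d⟩ := hDdir d1 hd1 d2 hd2
    obtain ⟨E, hEsub, hEne, hEdir, hElub⟩ := hc d
    obtain ⟨e1, he1, hu1e1⟩ :=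
      (wayBelow_trans_le hu1 (hv1d1.trans hd1d)) E hEne hEdir d hElub le_rfl
    obtain ⟨e2, he2, hu2e2⟩ :=
      (wayBelow_trans_le hu2 (hv2d2.trans hd2d)) E hEne hEdir d hElub le_rfl
    obtain ⟨e, he, he1e, he2e⟩ := hEdir e1 he1 e2 he2
    exact ⟨e, ⟨d, hEsub he, hDsub hd⟩, hu1e1.trans he1e, hu2e2.trans he2e⟩
  have hSlub : IsLUB S x := by
    constructor
    · rintro u ⟨v, huv, hvx⟩
      exact (wayBelow_le' huv).trans (wayBelow_le' hvx)
    · intro b hb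
      refine hDlub.2 fun d hd => ?_
      obtain ⟨E, hEsub, hEne, hEdir, hElub⟩ := hc d
      refine hElub.2 fun e he => hb ⟨d, hEsub he, hDsub hd⟩
  obtain ⟨u, hu, hau⟩ := hax S hSne hSdir x hSlub le_rfl
  obtain ⟨v, huv, hvx⟩ := hu
  exact ⟨v, le_trans_wayBelow hau huv, hvx⟩

lemma finiteInterp (hc : ContinuousPoset β) {F : Set β} (hF : F.Finite) {x : β}
    (hFx : ∀ a ∈ F, wayBelow a x) :
    ∃ c, wayBelow c x ∧ ∀ a ∈ F, wayBelow a c := by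
  obtain ⟨D, hDsub, hDne, hDdir, hDlub⟩ := hc x
  have hch : ∀ a ∈ F, ∃ s ∈ D, a ≤ s := fun a ha => hFx a ha D hDne hDdir x hDlub le_rfl
  choose! f hfD hf using hch
  obtain ⟨s, hsD, hbound⟩ := directedOn_finite_bound hDdir hDne (hF.image f)
    (by rintro _ ⟨a, ha, rfl⟩; exact hfD a ha)
  obtain ⟨c, hsc, hcx⟩ := interp hc (hDsub hsD)
  refine ⟨c, hcx, fun a ha => ?_⟩
  exact le_trans_wayBelow ((hf a ha).trans (hbound _ (Set.mem_image_of_mem f ha))) hsc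

end AuxLemmas

section DualLemmas

open OrderDual

variable {α : Type*} [PartialOrder α]

lemma dual_wayBelow_iff (h : Bicontinuous α) (a x : αᵒᵈ) :
    wayBelow a x ↔ wayBelow (ofDual x) (ofDual a) := by
  rw [h.2.1 (ofDual x) (ofDual a)]
  exact Iff.rfl

lemma bicontinuous_dual_continuous (h : Bicontinuous α) : ContinuousPoset αᵒᵈ := by
  intro x
  set x0 : α := ofDual x with hx0
  have hfil := (h.2.2 x0).1
  have hglb := (h.2.2 x0).2
  have hne : {y : α | wayBelow x0 y}.Nonempty := by
    by_contra hemp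
    rw [Set.not_nonempty_iff_eq_empty] at hemp
    have htop : ∀ y : α, y ≤ x0 := by
      intro y
      refine hglb.2 ?_
      rw [hemp]
      intro z hz
      exact absurd hz (by simp [Set.mem_empty_iff_false] at *)
    have : wayBelow x0 x0 := by
      rw [h.2.1]
      intro S hSne hSdir i hglb' hix
      obtain ⟨s, hs⟩ := hSne
      exact ⟨s, hs, htop s⟩
    exact absurd (hemp ▸ this : x0 ∈ (∅ : Set α)) (Set.notMem_empty x0)
  refine ⟨{a : αᵒᵈ | wayBelow x0 (ofDual a)}, ?_, ?_, ?_, ?_⟩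
  · intro a ha
    exact (dual_wayBelow_iff h a x).mpr ha
  · exact hne
  · exact hfil
  · exact hglb

end DualLemmas

/-- a globally hyperbolic poset is locally compact in its interval
topology. -/
theorem globallyHyperbolic_locallyCompact {α : Type*} [PartialOrder α]
    (h : GloballyHyperbolic α) :
    @LocallyCompactSpace α (intervalTop α) := by
  obtain ⟨hbi, hcomp⟩ := h
  letI : TopologicalSpace α := intervalTop α
  have hbasis : TopologicalSpace.IsTopologicalBasis
      ((fun f => Set.sInter f) '' {f : Set (Set α) | f.Finite ∧ f ⊆ intervalBasis α}) :=
    TopologicalSpace.isTopologicalBasis_of_subbasis rfl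
  refine ⟨fun x n hn => ?_⟩
  obtain ⟨t, ⟨f, ⟨hffin, hfsub⟩, rfl⟩, hxt, htn⟩ := hbasis.mem_nhds_iff.mp hn
  have hmem : ∀ s ∈ f, ∃ a b : α, s = {y | wayBelow a y ∧ wayBelow y b} :=
    fun s hs => hfsub hs
  have hne : Nonempty α := ⟨x⟩
  choose! aF bF hab using hmem
  have hxs : ∀ s ∈ f, wayBelow (aF s) x ∧ wayBelow x (bF s) := by
    intro s hs
    have := Set.mem_sInter.mp hxt s hs
    rwa [hab s hs] at this
  -- lower interpolation
  obtain ⟨c, hcx, hAc⟩ := finiteInterp hbi.1 (hffin.image aF)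
    (F := aF '' f) (x := x) (by rintro _ ⟨s, hs, rfl⟩; exact (hxs s hs).1)
  -- upper interpolation via the dual poset
  have hcont' : ContinuousPoset αᵒᵈ := bicontinuous_dual_continuous hbi
  obtain ⟨c', hc'x, hBc'⟩ := finiteInterp hcont'
    (F := OrderDual.toDual '' (bF '' f)) ((hffin.image bF).image OrderDual.toDual)
    (x := OrderDual.toDual x)
    (by
      rintro _ ⟨b, ⟨s, hs, rfl⟩, rfl⟩
      exact (dual_wayBelow_iff hbi _ _).mpr (hxs s hs).2)
  set d : α := OrderDual.ofDual c' with hd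
  have hxd : wayBelow x d := (dual_wayBelow_iff hbi c' (OrderDual.toDual x)).mp hc'x
  have hdB : ∀ s ∈ f, wayBelow d (bF s) := by
    intro s hs
    exact (dual_wayBelow_iff hbi (OrderDual.toDual (bF s)) c').mp
      (hBc' _ ⟨bF s, ⟨s, hs, rfl⟩, rfl⟩)
  have haC : ∀ s ∈ f, wayBelow (aF s) c := fun s hs => hAc _ ⟨s, hs, rfl⟩
  have hVopen : IsOpen {y : α | wayBelow c y ∧ wayBelow y d} :=
    TopologicalSpace.isOpen_generateFrom_of_mem ⟨c, d, rfl⟩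
  have hVsub : {y : α | wayBelow c y ∧ wayBelow y d} ⊆ Set.Icc c d :=
    fun y hy => ⟨wayBelow_le' hy.1, wayBelow_le' hy.2⟩
  have hIcc_nhds : Set.Icc c d ∈ nhds x :=
    Filter.mem_of_superset (hVopen.mem_nhds ⟨hcx, hxd⟩) hVsub
  have hIcc_sub : Set.Icc c d ⊆ Set.sInter f := by
    intro y hy
    refine Set.mem_sInter.mpr fun s hs => ?_
    rw [hab s hs]
    exact ⟨wayBelow_trans_le (haC s hs) hy.1, le_trans_wayBelow hy.2 (hdB s hs)⟩
  exact ⟨Set.Icc c d, hIcc_nhds, hIcc_sub.trans htn, hcomp c d⟩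
end

section
/- In the poset IX of closed intervals of a globally hyperbolic poset X ordered by reverse inclusion, the way-below relation is characterized by: [a,b] ≪ [c,d] iff a ≪ c in X and d ≪ b in X; moreover IX is a continuous dcpo. -/
open Set

section AuxProofs

variable {α : Type*} [PartialOrder α]

theorem IX.le_def {p q : IX α} :
    p ≤ q ↔ p.1.1 ≤ q.1.1 ∧ q.1.2 ≤ p.1.2 := Iff.rfl

theorem wb_le {a x : α} (h : wayBelow a x) : a ≤ x := by
  obtain ⟨s, hs, hle⟩ := h {x} ⟨x, rfl⟩
    (fun u hu v hv => ⟨x, rfl, by simp_all, by simp_all⟩) x isLUB_singleton le_rfl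
  have : s = x := hs
  exact this ▸ hle

theorem wb_mono {a' a x x' : α} (h1 : a' ≤ a) (h : wayBelow a x) (h2 : x ≤ x') :
    wayBelow a' x' := by
  intro S hne hdir d hd hxd
  obtain ⟨s, hs, hle⟩ := h S hne hdir d hd (h2.trans hxd)
  exact ⟨s, hs, h1.trans hle⟩

theorem up_nonempty (h : GloballyHyperbolic α) (x : α) :
    {y | wayBelow x y}.Nonempty := by
  by_contra hemp
  rw [Set.not_nonempty_iff_eq_empty] at hemp
  have hglb := (h.1.2.2 x).2
  rw [hemp] at hglb
  have htop : ∀ z : α, z ≤ x := fun z => hglb.2 (fun s hs => hs.elim)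
  have hwx : wayBelow x x := by
    rw [h.1.2.1]
    intro S hne hdir i hi hix
    obtain ⟨s, hs⟩ := hne
    exact ⟨s, hs, htop s⟩
  have : x ∈ ({y | wayBelow x y} : Set α) := hwx
  rw [hemp] at this
  exact this

theorem directedOn_finset_bound {β : Type*} {r : β → β → Prop} (htr : Transitive r)
    {D : Set β} (hdir : DirectedOn r D) {d0 : β} (hd0 : d0 ∈ D) (F : Finset β)
    (hF : ↑F ⊆ D) : ∃ e ∈ D, ∀ x ∈ F, r x e := by
  classical
  induction F using Finset.induction_on with
  | empty => exact ⟨d0, hd0, by simp⟩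
  | @insert a F' ha ih =>
    obtain ⟨e, he, hall⟩ := ih (fun x hx => hF (by simp [hx]))
    obtain ⟨z, hz, hez, haz⟩ := hdir e he a (hF (by simp))
    refine ⟨z, hz, fun x hx => ?_⟩
    rcases Finset.mem_insert.1 hx with rfl | hx'
    · exact haz
    · exact htr (hall x hx') hez

theorem isClosed_up (h : GloballyHyperbolic α) (d : α) :
    @IsClosed α (intervalTop α) {x | d ≤ x} := by
  have heq : {x : α | d ≤ x}ᶜ = ⋃₀ {V | V ∈ intervalBasis α ∧ V ⊆ {x : α | d ≤ x}ᶜ} := by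
    apply Set.Subset.antisymm
    · intro x hx
      have hxmem : ¬ d ≤ x := hx
      obtain ⟨Sx, hsub, ⟨p, hp⟩, _, _⟩ := h.1.1 x
      have hUx := h.1.2.2 x
      have hq : ∃ q, wayBelow x q ∧ ¬ d ≤ q := by
        by_contra hc
        push_neg at hc
        exact hxmem (hUx.2.2 (fun y hy => hc y hy))
      obtain ⟨q, hq1, hq2⟩ := hq
      refine ⟨{y | wayBelow p y ∧ wayBelow y q}, ⟨⟨p, q, rfl⟩, ?_⟩, ⟨hsub hp, hq1⟩⟩
      rintro y ⟨_, hyq⟩ hdy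
      exact hq2 (le_trans (hdy : d ≤ y) (wb_le hyq))
    · rintro x ⟨V, ⟨_, hVsub⟩, hxV⟩
      exact hVsub hxV
  have hopen : @IsOpen α (intervalTop α)
      (⋃₀ {V | V ∈ intervalBasis α ∧ V ⊆ {x : α | d ≤ x}ᶜ}) :=
    TopologicalSpace.GenerateOpen.sUnion _
      (fun V hV => TopologicalSpace.GenerateOpen.basic V hV.1)
  rw [← heq] at hopen
  exact @IsClosed.mk α (intervalTop α) _ hopen

theorem isClosed_down (h : GloballyHyperbolic α) (d : α) :
    @IsClosed α (intervalTop α) {x | x ≤ d} := by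
  have heq : {x : α | x ≤ d}ᶜ = ⋃₀ {V | V ∈ intervalBasis α ∧ V ⊆ {x : α | x ≤ d}ᶜ} := by
    apply Set.Subset.antisymm
    · intro x hx
      have hxmem : ¬ x ≤ d := hx
      obtain ⟨Sx, hsub, _, _, hlub⟩ := h.1.1 x
      obtain ⟨q, hq⟩ := up_nonempty h x
      have hp : ∃ p ∈ Sx, ¬ p ≤ d := by
        by_contra hc
        push_neg at hc
        exact hxmem (hlub.2 (fun y hy => hc y hy))
      obtain ⟨p, hp1, hp2⟩ := hp
      refine ⟨{y | wayBelow p y ∧ wayBelow y q}, ⟨⟨p, q, rfl⟩, ?_⟩, ⟨hsub hp1, hq⟩⟩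
      rintro y ⟨hpy, _⟩ hyd
      exact hp2 (le_trans (wb_le hpy) (hyd : y ≤ d))
    · rintro x ⟨V, ⟨_, hVsub⟩, hxV⟩
      exact hVsub hxV
  have hopen : @IsOpen α (intervalTop α)
      (⋃₀ {V | V ∈ intervalBasis α ∧ V ⊆ {x : α | x ≤ d}ᶜ}) :=
    TopologicalSpace.GenerateOpen.sUnion _
      (fun V hV => TopologicalSpace.GenerateOpen.basic V hV.1)
  rw [← heq] at hopen
  exact @IsClosed.mk α (intervalTop α) _ hopen

theorem exists_isLUB_Icc (h : GloballyHyperbolic α) {a b : α} {D : Set α}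
    (hD : D ⊆ Set.Icc a b) (hne : D.Nonempty) (hdir : DirectedOn (· ≤ ·) D) :
    ∃ e, IsLUB D e := by
  classical
  obtain ⟨d0, hd0⟩ := hne
  set t : ↥D ⊕ ↥(upperBounds D) → Set α :=
    Sum.elim (fun p => {x | p.1 ≤ x}) (fun u => {x | x ≤ u.1}) with ht
  have hclosed : ∀ i, @IsClosed α (intervalTop α) (t i) := by
    rintro (p | u)
    · exact isClosed_up h p.1
    · exact isClosed_down h u.1
  have hfip : ∀ u : Finset (↥D ⊕ ↥(upperBounds D)),
      (Set.Icc a b ∩ ⋂ i ∈ u, t i).Nonempty := by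
    intro u
    have hFsub : ↑(u.image (Sum.elim Subtype.val fun _ => d0)) ⊆ D := by
      intro x hx
      simp only [Finset.coe_image, Set.mem_image] at hx
      obtain ⟨i, _, rfl⟩ := hx
      cases i with
      | inl p => exact p.2
      | inr v => exact hd0
    obtain ⟨e, he, hall⟩ := directedOn_finset_bound
      (r := (· ≤ · : α → α → Prop)) (fun x y z hxy hyz => le_trans hxy hyz) hdir hd0
      (u.image (Sum.elim Subtype.val fun _ => d0)) hFsub
    refine ⟨e, hD he, ?_⟩
    simp only [Set.mem_iInter]
    rintro (p | v) hi
    · exact hall p.1 (Finset.mem_image_of_mem _ hi)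
    · exact v.2 he
  obtain ⟨x, _, hx2⟩ := @IsCompact.inter_iInter_nonempty α (intervalTop α) _ _
    (h.2 a b) t hclosed hfip
  refine ⟨x, ?_, ?_⟩
  · intro p hp
    exact (Set.mem_iInter.1 hx2 (Sum.inl ⟨p, hp⟩) : p ≤ x)
  · intro v hv
    exact (Set.mem_iInter.1 hx2 (Sum.inr ⟨v, hv⟩) : x ≤ v)

theorem exists_isGLB_Icc (h : GloballyHyperbolic α) {a b : α} {D : Set α}
    (hD : D ⊆ Set.Icc a b) (hne : D.Nonempty) (hdir : DirectedOn (· ≥ ·) D) :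
    ∃ e, IsGLB D e := by
  classical
  obtain ⟨d0, hd0⟩ := hne
  set t : ↥D ⊕ ↥(lowerBounds D) → Set α :=
    Sum.elim (fun p => {x | x ≤ p.1}) (fun u => {x | u.1 ≤ x}) with ht
  have hclosed : ∀ i, @IsClosed α (intervalTop α) (t i) := by
    rintro (p | u)
    · exact isClosed_down h p.1
    · exact isClosed_up h u.1
  have hfip : ∀ u : Finset (↥D ⊕ ↥(lowerBounds D)),
      (Set.Icc a b ∩ ⋂ i ∈ u, t i).Nonempty := by
    intro u
    have hFsub : ↑(u.image (Sum.elim Subtype.val fun _ => d0)) ⊆ D := by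
      intro x hx
      simp only [Finset.coe_image, Set.mem_image] at hx
      obtain ⟨i, _, rfl⟩ := hx
      cases i with
      | inl p => exact p.2
      | inr v => exact hd0
    obtain ⟨e, he, hall⟩ := directedOn_finset_bound
      (r := fun x y : α => y ≤ x) (fun x y z hxy hyz => le_trans hyz hxy) hdir hd0
      (u.image (Sum.elim Subtype.val fun _ => d0)) hFsub
    refine ⟨e, hD he, ?_⟩
    simp only [Set.mem_iInter]
    rintro (p | v) hi
    · exact hall p.1 (Finset.mem_image_of_mem _ hi)
    · exact v.2 he
  obtain ⟨x, _, hx2⟩ := @IsCompact.inter_iInter_nonempty α (intervalTop α) _ _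
    (h.2 a b) t hclosed hfip
  refine ⟨x, ?_, ?_⟩
  · intro p hp
    exact (Set.mem_iInter.1 hx2 (Sum.inl ⟨p, hp⟩) : x ≤ p)
  · intro v hv
    exact (Set.mem_iInter.1 hx2 (Sum.inr ⟨v, hv⟩) : v ≤ x)

theorem IX_lub (h : GloballyHyperbolic α)
    (S : Set (IX α)) (hdir : DirectedOn (· ≤ ·) S) (s0 : IX α) (hs0 : s0 ∈ S) :
    ∃ D : IX α, IsLUB S D ∧
      IsLUB ((fun s : IX α => s.1.1) '' {s ∈ S | s0 ≤ s}) D.1.1 ∧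
      IsGLB ((fun s : IX α => s.1.2) '' {s ∈ S | s0 ≤ s}) D.1.2 ∧
      DirectedOn (· ≤ ·) ((fun s : IX α => s.1.1) '' {s ∈ S | s0 ≤ s}) ∧
      DirectedOn (· ≥ ·) ((fun s : IX α => s.1.2) '' {s ∈ S | s0 ≤ s}) := by
  set S' := {s ∈ S | s0 ≤ s} with hS'
  have hS'mem : s0 ∈ S' := ⟨hs0, le_refl _⟩
  have hS'dir : DirectedOn (· ≤ ·) S' := by
    rintro x ⟨hx, hx0⟩ y ⟨hy, _⟩
    obtain ⟨z, hz, hxz, hyz⟩ := hdir x hx y hy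
    exact ⟨z, ⟨hz, hx0.trans hxz⟩, hxz, hyz⟩
  set L := (fun s : IX α => s.1.1) '' S' with hL
  set R := (fun s : IX α => s.1.2) '' S' with hR
  have hLsub : L ⊆ Set.Icc s0.1.1 s0.1.2 := by
    rintro _ ⟨s, ⟨_, h0⟩, rfl⟩
    exact ⟨(IX.le_def.1 h0).1, le_trans s.2 (IX.le_def.1 h0).2⟩
  have hRsub : R ⊆ Set.Icc s0.1.1 s0.1.2 := by
    rintro _ ⟨s, ⟨_, h0⟩, rfl⟩
    exact ⟨le_trans (IX.le_def.1 h0).1 s.2, (IX.le_def.1 h0).2⟩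
  have hLdir : DirectedOn (· ≤ ·) L := by
    rintro _ ⟨x, hx, rfl⟩ _ ⟨y, hy, rfl⟩
    obtain ⟨z, hz, hxz, hyz⟩ := hS'dir x hx y hy
    exact ⟨z.1.1, ⟨z, hz, rfl⟩, (IX.le_def.1 hxz).1, (IX.le_def.1 hyz).1⟩
  have hRdir : DirectedOn (· ≥ ·) R := by
    rintro _ ⟨x, hx, rfl⟩ _ ⟨y, hy, rfl⟩
    obtain ⟨z, hz, hxz, hyz⟩ := hS'dir x hx y hy
    exact ⟨z.1.2, ⟨z, hz, rfl⟩, (IX.le_def.1 hxz).2, (IX.le_def.1 hyz).2⟩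
  obtain ⟨e, hLlub⟩ := exists_isLUB_Icc h hLsub (show L.Nonempty from ⟨s0.1.1, ⟨s0, hS'mem, rfl⟩⟩) hLdir
  obtain ⟨f, hRglb⟩ := exists_isGLB_Icc h hRsub (show R.Nonempty from ⟨s0.1.2, ⟨s0, hS'mem, rfl⟩⟩) hRdir
  have hlbR : e ∈ lowerBounds R := by
    rintro _ ⟨s2, hs2, rfl⟩
    apply hLlub.2
    rintro _ ⟨s1, hs1, rfl⟩
    obtain ⟨z, _, h1z, h2z⟩ := hS'dir s1 hs1 s2 hs2
    exact le_trans (IX.le_def.1 h1z).1 (le_trans z.2 (IX.le_def.1 h2z).2)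
  have hef : e ≤ f := hRglb.2 hlbR
  refine ⟨⟨(e, f), hef⟩, ⟨?_, ?_⟩, hLlub, hRglb, hLdir, hRdir⟩
  · intro s hs
    obtain ⟨z, hz, hsz, h0z⟩ := hdir s hs s0 hs0
    have hz' : z ∈ S' := ⟨hz, h0z⟩
    exact le_trans hsz (IX.le_def.2 ⟨hLlub.1 ⟨z, hz', rfl⟩, hRglb.1 ⟨z, hz', rfl⟩⟩)
  · intro u hu
    refine IX.le_def.2 ⟨?_, ?_⟩
    · apply hLlub.2
      rintro _ ⟨s, hs, rfl⟩
      exact (IX.le_def.1 (hu hs.1)).1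
    · apply hRglb.2
      rintro _ ⟨s, hs, rfl⟩
      exact (IX.le_def.1 (hu hs.1)).2

theorem IX_approx (h : GloballyHyperbolic α) (q : IX α) :
    ∃ F : Set (IX α), (∀ z ∈ F, wayBelow z.1.1 q.1.1 ∧ wayBelow q.1.2 z.1.2) ∧
      F.Nonempty ∧ DirectedOn (· ≤ ·) F ∧ IsLUB F q := by
  obtain ⟨Sc, hsub, ⟨x0, hx0⟩, hScdir, hSclub⟩ := h.1.1 q.1.1
  obtain ⟨hUdir, hUglb⟩ := h.1.2.2 q.1.2
  obtain ⟨y0, hy0⟩ := up_nonempty h q.1.2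
  have hxy : ∀ x ∈ Sc, ∀ y, wayBelow q.1.2 y → x ≤ y := fun x hx y hy =>
    le_trans (wb_le (hsub hx)) (le_trans q.2 (wb_le hy))
  refine ⟨{z : IX α | z.1.1 ∈ Sc ∧ wayBelow q.1.2 z.1.2}, ?_, ?_, ?_, ?_, ?_⟩
  · rintro z ⟨h1, h2⟩
    exact ⟨hsub h1, h2⟩
  · exact ⟨⟨(x0, y0), hxy _ hx0 _ hy0⟩, hx0, hy0⟩
  · rintro z1 ⟨ha1, hb1⟩ z2 ⟨ha2, hb2⟩
    obtain ⟨x, hx, h1x, h2x⟩ := hScdir _ ha1 _ ha2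
    obtain ⟨y, hy, h1y, h2y⟩ := hUdir _ hb1 _ hb2
    exact ⟨⟨(x, y), hxy _ hx _ hy⟩, ⟨hx, hy⟩,
      IX.le_def.2 ⟨h1x, h1y⟩, IX.le_def.2 ⟨h2x, h2y⟩⟩
  · rintro z ⟨h1, h2⟩
    exact IX.le_def.2 ⟨wb_le (hsub h1), wb_le h2⟩
  · intro u hu
    refine IX.le_def.2 ⟨?_, ?_⟩
    · apply hSclub.2
      intro x hx
      exact (IX.le_def.1 (hu (show (⟨(x, y0), hxy _ hx _ hy0⟩ : IX α) ∈ _ from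
        ⟨hx, hy0⟩))).1
    · apply hUglb.2
      intro y hy
      exact (IX.le_def.1 (hu (show (⟨(x0, y), hxy _ hx0 _ hy⟩ : IX α) ∈ _ from
        ⟨hx0, hy⟩))).2

end AuxProofs

/-- way-below in `IX` is `[a,b] ≪ [c,d] ↔ a ≪ c ∧ d ≪ b`, and `IX`
is a continuous dcpo. -/
theorem IX_wayBelow_and_continuous {α : Type*} [PartialOrder α]
    (h : GloballyHyperbolic α) :
    (∀ p q : IX α, wayBelow p q ↔ wayBelow p.1.1 q.1.1 ∧ wayBelow q.1.2 p.1.2) ∧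
    (∀ S : Set (IX α), S.Nonempty → DirectedOn (· ≤ ·) S → ∃ d : IX α, IsLUB S d) ∧
    ContinuousPoset (IX α) := by
  have hchar : ∀ p q : IX α,
      wayBelow p q ↔ wayBelow p.1.1 q.1.1 ∧ wayBelow q.1.2 p.1.2 := by
    intro p q
    constructor
    · intro hwb
      obtain ⟨F, hFwb, hFne, hFdir, hFlub⟩ := IX_approx h q
      obtain ⟨z, hz, hpz⟩ := hwb F hFne hFdir q hFlub le_rfl
      exact ⟨wb_mono (IX.le_def.1 hpz).1 (hFwb z hz).1 le_rfl,
        wb_mono le_rfl (hFwb z hz).2 (IX.le_def.1 hpz).2⟩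
    · rintro ⟨h1, h2⟩ S hSne hSdir D0 hD0 hqD0
      obtain ⟨s0, hs0⟩ := hSne
      obtain ⟨D, hDlub, hLlub, hRglb, hLdir, hRdir⟩ := IX_lub h S hSdir s0 hs0
      rw [← hDlub.unique hD0] at hqD0
      obtain ⟨_, ⟨s1, hs1, rfl⟩, hps1⟩ :=
        h1 ((fun s : IX α => s.1.1) '' {s ∈ S | s0 ≤ s})
          ⟨s0.1.1, ⟨s0, ⟨hs0, le_rfl⟩, rfl⟩⟩ hLdir _ hLlub (IX.le_def.1 hqD0).1
      obtain ⟨_, ⟨s2, hs2, rfl⟩, hs2b⟩ := (h.1.2.1 q.1.2 p.1.2).mp h2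
        ((fun s : IX α => s.1.2) '' {s ∈ S | s0 ≤ s})
          ⟨s0.1.2, ⟨s0, ⟨hs0, le_rfl⟩, rfl⟩⟩ hRdir _ hRglb (IX.le_def.1 hqD0).2
      obtain ⟨z, hzS, h1z, h2z⟩ := hSdir s1 hs1.1 s2 hs2.1
      exact ⟨z, hzS, IX.le_def.2 ⟨hps1.trans (IX.le_def.1 h1z).1,
        (IX.le_def.1 h2z).2.trans hs2b⟩⟩
  refine ⟨hchar, ?_, ?_⟩
  · intro S hSne hSdir
    obtain ⟨s0, hs0⟩ := hSne
    obtain ⟨D, hDlub, _⟩ := IX_lub h S hSdir s0 hs0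
    exact ⟨D, hDlub⟩
  · intro q
    obtain ⟨F, hFwb, hFne, hFdir, hFlub⟩ := IX_approx h q
    exact ⟨F, fun z hz => (hchar z q).mpr (hFwb z hz), hFne, hFdir, hFlub⟩
end
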